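/- Let 𝒦 be a Hilbert space and T a self-adjoint injective positive contraction with 1-T injective. Then the pairs of subspaces Γ(T) and Γ(-T) of 𝒦 ⊕ 𝒦 are in generic position: Γ(T) ∩ Γ(-T) = 0, Γ(T) ∩ Γ(-T)^⊥ = 0, Γ(T)^⊥ ∩ Γ(-T) = 0, and Γ(T)^⊥ ∩ Γ(-T)^⊥ = 0. -/

import Mathlib

open scoped ComplexInnerProductSpace

/-- The graph of a continuous linear operator, as a subspace of the Hilbert-space
direct sum `𝒦 ⊕₂ 𝒦`. -/
noncomputable def graphL2 {𝒦 : Type*} [NormedAddCommGroup 𝒦] [InnerProductSpace ℂ 𝒦]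
    (T : 𝒦 →L[ℂ] 𝒦) : Submodule ℂ (WithLp 2 (𝒦 × 𝒦)) :=
  (LinearMap.graph (T : 𝒦 →ₗ[ℂ] 𝒦)).comap (WithLp.linearEquiv 2 ℂ (𝒦 × 𝒦)).toLinearMap

lemma mem_graphL2 {𝒦 : Type*} [NormedAddCommGroup 𝒦] [InnerProductSpace ℂ 𝒦]
    (T : 𝒦 →L[ℂ] 𝒦) (v : WithLp 2 (𝒦 × 𝒦)) :
    v ∈ graphL2 T ↔ v.ofLp.2 = T v.ofLp.1 := Iff.rfl

lemma mem_graphL2_orth {𝒦 : Type*} [NormedAddCommGroup 𝒦] [InnerProductSpace ℂ 𝒦]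
    [CompleteSpace 𝒦] (T : 𝒦 →L[ℂ] 𝒦) (hT : IsSelfAdjoint T) (v : WithLp 2 (𝒦 × 𝒦)) :
    v ∈ (graphL2 T)ᗮ ↔ v.ofLp.1 = - T v.ofLp.2 := by
  rw [Submodule.mem_orthogonal]
  constructor
  · intro h
    have key : ∀ x : 𝒦, ⟪x, v.ofLp.1 + T v.ofLp.2⟫ = 0 := by
      intro x
      have hx : ((WithLp.equiv 2 (𝒦 × 𝒦)).symm (x, T x)) ∈ graphL2 T := by
        rw [mem_graphL2]; simp
      have := h _ hx
      rw [WithLp.prod_inner_apply] at this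
      have h2 : ⟪T x, v.ofLp.2⟫ = ⟪x, T v.ofLp.2⟫ := by
        conv_lhs => rw [← hT.adjoint_eq]
        exact ContinuousLinearMap.adjoint_inner_left T v.ofLp.2 x
      rw [inner_add_right, ← h2]; simpa using this
    have := key (v.ofLp.1 + T v.ofLp.2)
    rw [inner_self_eq_zero] at this
    linear_combination (norm := module) this
  · intro hv u hu
    rw [mem_graphL2] at hu
    rw [WithLp.prod_inner_apply, hu, hv]
    have h2 : ⟪T u.ofLp.1, v.ofLp.2⟫ = ⟪u.ofLp.1, T v.ofLp.2⟫ := by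
      conv_lhs => rw [← hT.adjoint_eq]
      exact ContinuousLinearMap.adjoint_inner_left T v.ofLp.2 u.ofLp.1
    show ⟪u.ofLp.1, -T v.ofLp.2⟫ + ⟪T u.ofLp.1, v.ofLp.2⟫ = 0
    rw [h2, inner_neg_right]
    ring

theorem stmt8 {𝒦 : Type*} [NormedAddCommGroup 𝒦] [InnerProductSpace ℂ 𝒦] [CompleteSpace 𝒦]
    (T : 𝒦 →L[ℂ] 𝒦) (hT : IsSelfAdjoint T)
    (hpos : ∀ x : 𝒦, 0 ≤ (⟪T x, x⟫).re) (hcontr : ‖T‖ ≤ 1)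
    (hker : LinearMap.ker (T : 𝒦 →ₗ[ℂ] 𝒦) = ⊥)
    (hker1 : LinearMap.ker ((1 - T : 𝒦 →L[ℂ] 𝒦) : 𝒦 →ₗ[ℂ] 𝒦) = ⊥) :
    graphL2 T ⊓ graphL2 (-T) = ⊥ ∧
    graphL2 T ⊓ (graphL2 (-T))ᗮ = ⊥ ∧
    (graphL2 T)ᗮ ⊓ graphL2 (-T) = ⊥ ∧
    (graphL2 T)ᗮ ⊓ (graphL2 (-T))ᗮ = ⊥ := by
  have hTinj : ∀ x : 𝒦, T x = 0 → x = 0 := by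
    intro x hx
    have : x ∈ LinearMap.ker (T : 𝒦 →ₗ[ℂ] 𝒦) := hx
    rw [hker] at this
    simpa using this
  have h1Tinj : ∀ x : 𝒦, x - T x = 0 → x = 0 := by
    intro x hx
    have : (1 - T) x = 0 := by simpa using hx
    exact (Submodule.mem_bot ℂ).mp (hker1 ▸ LinearMap.mem_ker.mpr this)
  have h1pTinj : ∀ x : 𝒦, x + T x = 0 → x = 0 := by
    intro x hx
    have h : ⟪x + T x, x⟫ = 0 := by rw [hx, inner_zero_left]
    have h2 : (⟪x + T x, x⟫).re = ‖x‖ ^ 2 + (⟪T x, x⟫).re := by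
      rw [inner_add_left]
      simp only [Complex.add_re]
      congr 1
      simpa using inner_self_eq_norm_sq (𝕜 := ℂ) x
    have := hpos x
    have hn : ‖x‖ ^ 2 = 0 := by
      have := h2 ▸ congrArg Complex.re h
      simp only [Complex.zero_re] at this
      nlinarith [sq_nonneg ‖x‖]
    simpa using pow_eq_zero_iff (n := 2) (by norm_num) |>.mp hn
  have hsA : IsSelfAdjoint (-T) := hT.neg
  have hext : ∀ v : WithLp 2 (𝒦 × 𝒦), v.ofLp.1 = 0 → v.ofLp.2 = 0 → v = 0 := by
    intro v h1 h2
    apply (WithLp.equiv 2 (𝒦 × 𝒦)).injective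
    exact Prod.ext h1 h2
  refine ⟨?_, ?_, ?_, ?_⟩
  · rw [Submodule.eq_bot_iff]
    intro v hv
    rw [Submodule.mem_inf] at hv
    obtain ⟨ha, hb⟩ := hv
    rw [mem_graphL2] at ha hb
    have hx : v.ofLp.1 = 0 := by
      apply hTinj
      have h : T v.ofLp.1 = -(T v.ofLp.1) := by
        have := ha.symm.trans hb
        simpa using this
      have h2 : (2:ℂ) • T v.ofLp.1 = 0 := by
        rw [two_smul]; nth_rewrite 2 [h]; simp
      simpa using (smul_eq_zero.mp h2).resolve_left (by norm_num)
    exact hext v hx (by rw [ha, hx, map_zero])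
  · rw [Submodule.eq_bot_iff]
    intro v hv
    rw [Submodule.mem_inf] at hv
    obtain ⟨ha, hb⟩ := hv
    rw [mem_graphL2] at ha
    rw [mem_graphL2_orth _ hsA] at hb
    -- hb : v.ofLp.1 = -(-T) v.ofLp.2 = T v.ofLp.2 ; ha : v.ofLp.2 = T v.ofLp.1
    have hb' : v.ofLp.1 = T v.ofLp.2 := by simpa using hb
    have h2 : v.ofLp.1 = T (T v.ofLp.1) := by
      have := hb'; rw [ha] at this; exact this
    have hkey : (v.ofLp.1 + T v.ofLp.1) - T (v.ofLp.1 + T v.ofLp.1) = 0 := by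
      rw [map_add]
      have : T (T v.ofLp.1) = v.ofLp.1 := h2.symm
      rw [this]; abel
    have h0 : v.ofLp.1 + T v.ofLp.1 = 0 := h1Tinj _ hkey
    have hx : v.ofLp.1 = 0 := h1pTinj _ h0
    exact hext v hx (by rw [ha, hx, map_zero])
  · rw [Submodule.eq_bot_iff]
    intro v hv
    rw [Submodule.mem_inf] at hv
    obtain ⟨ha, hb⟩ := hv
    rw [mem_graphL2_orth _ hT] at ha
    rw [mem_graphL2] at hb
    -- ha : v.ofLp.1 = -T v.ofLp.2 ; hb : v.ofLp.2 = -T v.ofLp.1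
    have h2 : v.ofLp.2 = T (T v.ofLp.2) := by
      have := hb; rw [ha] at this; simpa using this
    have hkey : (v.ofLp.2 + T v.ofLp.2) - T (v.ofLp.2 + T v.ofLp.2) = 0 := by
      rw [map_add, ← h2]; abel
    have hy : v.ofLp.2 = 0 := h1pTinj _ (h1Tinj _ hkey)
    exact hext v (by rw [ha, hy, map_zero, neg_zero]) hy
  · rw [Submodule.eq_bot_iff]
    intro v hv
    rw [Submodule.mem_inf] at hv
    obtain ⟨ha, hb⟩ := hv
    rw [mem_graphL2_orth _ hT] at ha
    rw [mem_graphL2_orth _ hsA] at hb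
    have hb' : v.ofLp.1 = T v.ofLp.2 := by simpa using hb
    have hy : v.ofLp.2 = 0 := by
      apply hTinj
      have h : T v.ofLp.2 = -(T v.ofLp.2) := hb'.symm.trans ha
      have h2 : (2:ℂ) • T v.ofLp.2 = 0 := by
        rw [two_smul]; nth_rewrite 2 [h]; simp
      simpa using (smul_eq_zero.mp h2).resolve_left (by norm_num)
    exact hext v (by rw [hb', hy, map_zero]) hy
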